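/- Let f : ℝⁿ → ℝ be L-smooth, bounded below with lower bound f⋆, and let x^{k+1} = x^k - (1/L)∇f(x^k) for k = 1,…,N with f(x¹) - f⋆ ≤ Δ. Then min_{1≤k≤N+1} ‖∇f(x^k)‖ ≤ (2LΔ/(N+1))^{1/2}. -/

import Mathlib

open InnerProductSpace

lemma descent_aux {n : ℕ} (f : EuclideanSpace ℝ (Fin n) → ℝ) (L : ℝ) (hL : 0 < L)
    (hf : Differentiable ℝ f)
    (hlip : ∀ x y, ‖gradient f x - gradient f y‖ ≤ L * ‖x - y‖)
    (x v : EuclideanSpace ℝ (Fin n)) :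
    f (x + v) ≤ f x + inner ℝ (gradient f x) v + L / 2 * ‖v‖ ^ 2 := by
  set c : ℝ := inner ℝ (gradient f x) v with hc
  set φ : ℝ → ℝ := fun t => f (x + t • v) - t * c - L / 2 * t ^ 2 * ‖v‖ ^ 2 with hφ
  have hder : ∀ t : ℝ, HasDerivAt φ
      ((inner ℝ (gradient f (x + t • v)) v : ℝ) - c - L * t * ‖v‖ ^ 2) t := by
    intro t
    have h1 : HasDerivAt (fun t : ℝ => x + t • v) v t := by
      simpa using ((hasDerivAt_id t).smul_const v).const_add x
    have h2 : HasDerivAt (fun t : ℝ => f (x + t • v))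
        (fderiv ℝ f (x + t • v) v) t :=
      (hf (x + t • v)).hasFDerivAt.comp_hasDerivAt t h1
    have h3 : fderiv ℝ f (x + t • v) v = (inner ℝ (gradient f (x + t • v)) v : ℝ) := by
      rw [← toDual_apply_apply]
      congr 1
      simp [gradient]
    rw [h3] at h2
    have h4 : HasDerivAt (fun t : ℝ => t * c) c t := by
      simpa using (hasDerivAt_id t).mul_const c
    have h5 : HasDerivAt (fun t : ℝ => L / 2 * t ^ 2 * ‖v‖ ^ 2)
        (L * t * ‖v‖ ^ 2) t := by
      have := ((hasDerivAt_pow 2 t).const_mul (L / 2)).mul_const (‖v‖ ^ 2)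
      exact this.congr_deriv (by push_cast; ring)
    exact (h2.sub h4).sub h5
  have hanti : AntitoneOn φ (Set.Icc (0 : ℝ) 1) := by
    apply antitoneOn_of_deriv_nonpos (convex_Icc 0 1)
    · exact Continuous.continuousOn (continuous_iff_continuousAt.2
        (fun t => (hder t).differentiableAt.continuousAt))
    · intro t ht
      exact (hder t).differentiableAt.differentiableWithinAt
    · intro t ht
      rw [interior_Icc] at ht
      rw [(hder t).deriv]
      have hb : (inner ℝ (gradient f (x + t • v)) v : ℝ) - c ≤ L * t * ‖v‖ ^ 2 := by
        have h1 : (inner ℝ (gradient f (x + t • v)) v : ℝ) - c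
            = inner ℝ (gradient f (x + t • v) - gradient f x) v := by
          rw [inner_sub_left]
        rw [h1]
        calc (inner ℝ (gradient f (x + t • v) - gradient f x) v : ℝ)
            ≤ ‖gradient f (x + t • v) - gradient f x‖ * ‖v‖ := real_inner_le_norm _ _
          _ ≤ (L * ‖(x + t • v) - x‖) * ‖v‖ := by
              apply mul_le_mul_of_nonneg_right (hlip _ _) (norm_nonneg _)
          _ = L * t * ‖v‖ ^ 2 := by
              have : ‖(x + t • v) - x‖ = |t| * ‖v‖ := by
                simp [norm_smul]
              rw [this, abs_of_pos ht.1]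
              ring
      linarith
  have key := hanti (Set.mem_Icc.2 ⟨le_refl 0, zero_le_one⟩)
    (Set.mem_Icc.2 ⟨zero_le_one, le_refl 1⟩) zero_le_one
  simp only [hφ] at key
  simp at key
  linarith [key]

lemma descent_step {n : ℕ} (f : EuclideanSpace ℝ (Fin n) → ℝ) (L : ℝ) (hL : 0 < L)
    (hf : Differentiable ℝ f)
    (hlip : ∀ x y, ‖gradient f x - gradient f y‖ ≤ L * ‖x - y‖)
    (x : EuclideanSpace ℝ (Fin n)) :
    f (x - (1 / L) • gradient f x) ≤ f x - 1 / (2 * L) * ‖gradient f x‖ ^ 2 := by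
  have h := descent_aux f L hL hf hlip x (-((1 / L) • gradient f x))
  have h1 : x + -((1/L) • gradient f x) = x - (1/L) • gradient f x := by abel
  rw [h1] at h
  have h2 : (inner ℝ (gradient f x) (-((1/L) • gradient f x)) : ℝ)
      = -(1/L) * ‖gradient f x‖ ^ 2 := by
    rw [inner_neg_right, real_inner_smul_right, real_inner_self_eq_norm_sq]
    ring
  have h3 : ‖-((1/L) • gradient f x)‖ ^ 2 = (1/L)^2 * ‖gradient f x‖ ^ 2 := by
    rw [norm_neg, norm_smul]
    rw [Real.norm_eq_abs, abs_of_pos (by positivity : (0:ℝ) < 1/L)]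
    ring
  rw [h2, h3] at h
  have hL' : L ≠ 0 := ne_of_gt hL
  calc f (x - (1/L) • gradient f x)
      ≤ f x + -(1/L) * ‖gradient f x‖^2 + L/2 * ((1/L)^2 * ‖gradient f x‖^2) := h
    _ = f x - 1/(2*L) * ‖gradient f x‖^2 := by field_simp; ring

theorem stmt_6 {n : ℕ} (f : EuclideanSpace ℝ (Fin n) → ℝ) (L : ℝ) (hL : 0 < L)
    (hf : Differentiable ℝ f)
    (hlip : ∀ x y, ‖gradient f x - gradient f y‖ ≤ L * ‖x - y‖)
    (fstar : ℝ) (hlow : ∀ y, fstar ≤ f y)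
    (Δ : ℝ) (hΔ : 0 < Δ) (N : ℕ) (hN : 1 ≤ N)
    (x : ℕ → EuclideanSpace ℝ (Fin n))
    (hinit : f (x 1) - fstar ≤ Δ)
    (hupd : ∀ k, 1 ≤ k → k ≤ N → x (k + 1) = x k - (1 / L) • gradient f (x k)) :
    ∃ k ∈ Finset.Icc 1 (N + 1),
      ‖gradient f (x k)‖ ≤ Real.sqrt (2 * L * Δ / (N + 1)) := by
  by_contra hcon
  push_neg at hcon
  have hB : (0:ℝ) ≤ 2 * L * Δ / (N + 1) := by positivity
  have hsq : ∀ k, 1 ≤ k → k ≤ N + 1 →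
      2 * L * Δ / (N + 1) < ‖gradient f (x k)‖ ^ 2 := by
    intro k h1 h2
    have := hcon k (Finset.mem_Icc.2 ⟨h1, h2⟩)
    nlinarith [Real.sq_sqrt hB, Real.sqrt_nonneg (2 * L * Δ / (N + 1)),
      norm_nonneg (gradient f (x k))]
  have hstep : ∀ k, 1 ≤ k → k ≤ N →
      f (x (k + 1)) < f (x k) - Δ / (N + 1) := by
    intro k h1 h2
    rw [hupd k h1 h2]
    have hd := descent_step f L hL hf hlip (x k)
    have hs := hsq k h1 (le_trans h2 (Nat.le_succ N))
    have h2L : (0:ℝ) < 2 * L := by linarith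
    have : Δ / (N+1) < 1/(2*L) * ‖gradient f (x k)‖^2 := by
      rw [div_mul_eq_mul_div, one_mul, lt_div_iff₀ h2L]
      calc Δ / (N+1) * (2*L) = 2 * L * Δ / (N+1) := by ring
        _ < ‖gradient f (x k)‖^2 := hs
    linarith
  have hchain : ∀ k : ℕ, k ≤ N → f (x (k + 1)) ≤ f (x 1) - k * (Δ / (N + 1)) := by
    intro k
    induction k with
    | zero => intro _; simp
    | succ m ih =>
      intro hm
      have hm' : m ≤ N := le_trans (Nat.le_succ m) hm
      have ih' := ih (le_trans (Nat.le_succ m) hm)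
      have h1 : 1 ≤ m + 1 := Nat.succ_le_succ (Nat.zero_le m)
      have hst := hstep (m+1) h1 hm
      push_cast
      have : (m:ℝ) ≥ 0 := Nat.cast_nonneg m
      nlinarith [hst, ih']
  have hlast := hchain N (le_refl N)
  -- final descent at x (N+1)
  have hd := descent_step f L hL hf hlip (x (N+1))
  have hs := hsq (N+1) (by omega) (le_refl _)
  have h2L : (0:ℝ) < 2 * L := by linarith
  have hfin : Δ / (N+1) < 1/(2*L) * ‖gradient f (x (N+1))‖^2 := by
    rw [div_mul_eq_mul_div, one_mul, lt_div_iff₀ h2L]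
    calc Δ / (N+1) * (2*L) = 2 * L * Δ / (N+1) := by ring
      _ < ‖gradient f (x (N+1))‖^2 := hs
  have hlow' := hlow (x (N+1) - (1/L) • gradient f (x (N+1)))
  -- f⋆ ≤ f(x^{N+1}) - 1/(2L)‖g‖² < f(x^{N+1}) - Δ/(N+1) ≤ f(x1) - N*Δ/(N+1) - Δ/(N+1)
  have hNpos : (0:ℝ) < (N:ℝ) + 1 := by positivity
  have hsum : (N:ℝ) * (Δ/(N+1)) + Δ/(N+1) = Δ := by
    field_simp
  linarith [hlow', hd, hfin, hlast, hinit]
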